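/- Let (X,d) be a separable metric space, let φ : X → X be a continuous map, let ℓ be a locally finite Borel reference measure on X with respect to which φ is nonsingular, and let μ be a physical measure for φ with open neighbourhood U of its support. Suppose the Borel probability measure ν is absolutely continuous with respect to ℓ and ν(U) = 1. Then (1/T) Σ_{t=0}^{T-1} φ^t_*ν → μ in the weak topology on P(X) as T → ∞. -/

import Mathlib

open MeasureTheory Filter Topology ENNReal

noncomputable section

/-- Pushforward of a probability measure under a measurable map. -/
def pushPM {α β : Type*} [MeasurableSpace α] [MeasurableSpace β]
    (f : α → β) (hf : Measurable f) (ν : ProbabilityMeasure α) : ProbabilityMeasure β :=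
  ⟨(ν : Measure α).map f, Measure.isProbabilityMeasure_map hf.aemeasurable⟩

/-- Cesàro average `(1/(T+1)) ∑_{t=0}^{T} s t` of a sequence of probability measures. -/
def avgPM {α : Type*} [MeasurableSpace α] (s : ℕ → ProbabilityMeasure α) (T : ℕ) :
    ProbabilityMeasure α :=
  ⟨((T + 1 : ℕ) : ℝ≥0∞)⁻¹ • ∑ t ∈ Finset.range (T + 1), (s t : Measure α), by
    constructor
    simp only [Measure.smul_apply, Measure.finset_sum_apply, measure_univ, Finset.sum_const,
      Finset.card_range, nsmul_eq_mul, mul_one, smul_eq_mul]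
    rw [ENNReal.inv_mul_cancel] <;> simp⟩

/-- The Dirac probability measure at a point. -/
def diracPM {α : Type*} [MeasurableSpace α] (x : α) : ProbabilityMeasure α :=
  ⟨Measure.dirac x, inferInstance⟩

/-- Empirical measure `(1/(T+1)) ∑_{t=0}^{T} δ_{f^t(x)}`. -/
def empMeas {α : Type*} [MeasurableSpace α] (f : α → α) (x : α) (T : ℕ) :
    ProbabilityMeasure α :=
  avgPM (fun t => diracPM (f^[t] x)) T

/-- Basin of a probability measure: points whose empirical measures converge weakly to `μ`. -/
def mBasin {α : Type*} [TopologicalSpace α] [MeasurableSpace α] [OpensMeasurableSpace α]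
    (f : α → α) (μ : ProbabilityMeasure α) : Set α :=
  {x | Tendsto (fun T : ℕ => empMeas f x T) atTop (𝓝 μ)}

/-- Support of a measure: points all of whose open neighbourhoods have positive measure. -/
def msupport {α : Type*} [TopologicalSpace α] [MeasurableSpace α] (m : Measure α) : Set α :=
  {x | ∀ u : Set α, IsOpen u → x ∈ u → m u ≠ 0}

lemma integral_avgPM {X : Type*} [MeasurableSpace X] [TopologicalSpace X] [OpensMeasurableSpace X]
    (s : ℕ → ProbabilityMeasure X) (T : ℕ) (f : BoundedContinuousFunction X ℝ) :
    ∫ x, f x ∂(avgPM s T : Measure X)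
      = ((T + 1 : ℕ) : ℝ)⁻¹ * ∑ t ∈ Finset.range (T + 1), ∫ x, f x ∂(s t : Measure X) := by
  show ∫ x, f x ∂(((T + 1 : ℕ) : ℝ≥0∞)⁻¹ • ∑ t ∈ Finset.range (T + 1), (s t : Measure X)) = _
  rw [integral_smul_measure, integral_finset_sum_measure (fun t _ => f.integrable _)]
  have : (((T + 1 : ℕ) : ℝ≥0∞)⁻¹).toReal = ((T + 1 : ℕ) : ℝ)⁻¹ := by
    rw [ENNReal.toReal_inv]; simp [ENNReal.toReal_add]
  rw [this, smul_eq_mul]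


/-- For a continuous map `φ`, nonsingular w.r.t. a locally finite reference
measure `ℓ`, with physical measure `μ` (with open neighbourhood `U` of its support), and a Borel
probability measure `ν ≪ ℓ` with `ν(U) = 1`, the Cesàro averages `(1/T) ∑_{t<T} φ^t_*ν` converge
weakly to `μ`. -/
theorem statement16 {X : Type*} [MetricSpace X] [TopologicalSpace.SeparableSpace X]
    [MeasurableSpace X] [BorelSpace X]
    (φ : X → X) (hφ : Continuous φ)
    (ℓ : Measure X) [IsLocallyFiniteMeasure ℓ]
    (hns : ℓ.map φ ≪ ℓ)
    (μ : ProbabilityMeasure X) (U : Set X)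
    (hUopen : IsOpen U) (hUsupp : msupport (μ : Measure X) ⊆ U)
    (hcompact : IsCompact (msupport (μ : Measure X)))
    (hphys : ℓ (U \ mBasin φ μ) = 0)
    (ν : ProbabilityMeasure X)
    (habs : (ν : Measure X) ≪ ℓ) (hνU : (ν : Measure X) U = 1) :
    Tendsto (fun T : ℕ => avgPM (fun t => pushPM (φ^[t]) (hφ.measurable.iterate t) ν) T)
      atTop (𝓝 μ) := by
  -- ν-a.e. point is in the basin
  have hbasin : ∀ᵐ x ∂(ν : Measure X), x ∈ mBasin φ μ := by
    have h1 : (ν : Measure X) Uᶜ = 0 := by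
      have hc := measure_compl hUopen.measurableSet (measure_ne_top (ν : Measure X) U)
      simp [hνU] at hc
      simpa using hc
    have h2 : (ν : Measure X) (U \ mBasin φ μ) = 0 := habs hphys
    have hsub : (mBasin φ μ)ᶜ ⊆ Uᶜ ∪ (U \ mBasin φ μ) := by
      intro x hx
      by_cases hxU : x ∈ U
      · exact Or.inr ⟨hxU, hx⟩
      · exact Or.inl hxU
    have : (ν : Measure X) (mBasin φ μ)ᶜ = 0 :=
      measure_mono_null hsub (measure_union_null h1 h2)
    exact this
  rw [ProbabilityMeasure.tendsto_iff_forall_integral_tendsto]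
  intro f
  set F : ℕ → X → ℝ :=
    fun T x => ((T + 1 : ℕ) : ℝ)⁻¹ * ∑ t ∈ Finset.range (T + 1), f (φ^[t] x) with hF
  -- integral against the averaged pushforward equals ∫ F T dν
  have hA : ∀ T : ℕ,
      ∫ x, f x ∂((avgPM (fun t => pushPM (φ^[t]) (hφ.measurable.iterate t) ν) T : Measure X))
        = ∫ x, F T x ∂(ν : Measure X) := by
    intro T
    rw [integral_avgPM]
    have hpush : ∀ t : ℕ,
        ∫ x, f x ∂((pushPM (φ^[t]) (hφ.measurable.iterate t) ν : Measure X))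
          = ∫ x, f (φ^[t] x) ∂(ν : Measure X) := by
      intro t
      show ∫ x, f x ∂((ν : Measure X).map (φ^[t])) = _
      exact integral_map (hφ.measurable.iterate t).aemeasurable
        f.continuous.aestronglyMeasurable
    simp only [hpush]
    rw [hF]
    have hint : ∀ t ∈ Finset.range (T + 1),
        Integrable (fun x => f (φ^[t] x)) (ν : Measure X) := fun t _ =>
      (f.compContinuous ⟨φ^[t], hφ.iterate t⟩).integrable _
    rw [integral_const_mul, integral_finset_sum _ hint]
  -- integral against empirical measure equals F T x
  have hB : ∀ (x : X) (T : ℕ),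
      ∫ y, f y ∂((empMeas φ x T : Measure X)) = F T x := by
    intro x T
    show ∫ y, f y ∂((avgPM (fun t => diracPM (φ^[t] x)) T : Measure X)) = _
    rw [integral_avgPM]
    congr 1
    refine Finset.sum_congr rfl fun t _ => ?_
    show ∫ y, f y ∂(Measure.dirac (φ^[t] x)) = _
    exact integral_dirac _ _
  -- pointwise a.e. convergence
  have hptwise : ∀ᵐ x ∂(ν : Measure X),
      Tendsto (fun T => F T x) atTop (𝓝 (∫ y, f y ∂(μ : Measure X))) := by
    filter_upwards [hbasin] with x hx
    have := (ProbabilityMeasure.tendsto_iff_forall_integral_tendsto.mp hx) f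
    simpa only [hB x] using this
  -- dominated convergence
  have hmeas : ∀ T : ℕ, AEStronglyMeasurable (F T) (ν : Measure X) := by
    intro T
    refine (Continuous.aestronglyMeasurable ?_)
    exact continuous_const.mul (continuous_finset_sum _ fun t _ =>
      f.continuous.comp (hφ.iterate t))
  have hbound : ∀ T : ℕ, ∀ᵐ x ∂(ν : Measure X), ‖F T x‖ ≤ ‖f‖ := by
    intro T
    refine Filter.Eventually.of_forall fun x => ?_
    rw [hF]
    have h1 : ‖∑ t ∈ Finset.range (T + 1), f (φ^[t] x)‖ ≤ (T + 1 : ℕ) * ‖f‖ := by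
      calc ‖∑ t ∈ Finset.range (T + 1), f (φ^[t] x)‖
          ≤ ∑ t ∈ Finset.range (T + 1), ‖f (φ^[t] x)‖ := norm_sum_le _ _
        _ ≤ ∑ t ∈ Finset.range (T + 1), ‖f‖ :=
            Finset.sum_le_sum fun t _ => f.norm_coe_le_norm _
        _ = (T + 1 : ℕ) * ‖f‖ := by simp [Finset.sum_const, Finset.card_range]
    rw [norm_mul]
    have hTpos : (0:ℝ) < ((T + 1 : ℕ) : ℝ) := by positivity
    rw [norm_inv, Real.norm_natCast]
    calc ((T + 1 : ℕ) : ℝ)⁻¹ * ‖∑ t ∈ Finset.range (T + 1), f (φ^[t] x)‖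
        ≤ ((T + 1 : ℕ) : ℝ)⁻¹ * ((T + 1 : ℕ) * ‖f‖) := by
          exact mul_le_mul_of_nonneg_left h1 (by positivity)
      _ = ‖f‖ := by field_simp
  have := tendsto_integral_of_dominated_convergence (fun _ => ‖f‖) hmeas
    (integrable_const _) hbound hptwise
  simpa only [hA, integral_const, measure_univ, ENNReal.toReal_one, probReal_univ, smul_eq_mul, one_mul]
    using this


end
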